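/- With the setup of the previous statement (σ ergodic invertible, log c, log d ∈ L^1(m), ∫ log c dm < log γ < 0), the solution a(ω) = Σ_{j=0}^∞ γ^{-j-1} d(σ^{-j-1}ω) ∏_{k=1}^{j} c(σ^{-k}ω) of the twisted cohomological equation γ·a∘σ = c·a + d is a tempered function: for m-a.e. ω, lim_{|n|→∞} (1/n)·log a(σ^n ω) = 0. -/

import Mathlib

open MeasureTheory Filter

set_option linter.unusedSectionVars false
set_option linter.unnecessarySimpa false

namespace Stmt11Aux




variable {Ω : Type*} [MeasurableSpace Ω] {m : Measure Ω}

lemma integrable_comp_mp [IsProbabilityMeasure m] {T : Ω → Ω} (hT : MeasurePreserving T m m)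
    {g : Ω → ℝ} (hgi : Integrable g m) : Integrable (fun ω => g (T ω)) m :=
  memLp_one_iff_integrable.1 ((memLp_one_iff_integrable.2 hgi).comp_measurePreserving hT)

lemma integral_comp_mp {T : Ω → Ω} (hT : MeasurePreserving T m m)
    {g : Ω → ℝ} (hg : AEStronglyMeasurable g m) :
    ∫ ω, g (T ω) ∂m = ∫ ω, g ω ∂m := by
  rw [← integral_map hT.measurable.aemeasurable (by rwa [hT.map_eq]), hT.map_eq]

/-- Birkhoff sums. -/
noncomputable def birkS (σ : Ω → Ω) (g : Ω → ℝ) (n : ℕ) (ω : Ω) : ℝ :=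
  ∑ k ∈ Finset.range n, g (σ^[k] ω)

/-- Garsia's maximal functions. -/
noncomputable def birkM (σ : Ω → Ω) (g : Ω → ℝ) : ℕ → Ω → ℝ
  | 0 => fun _ => 0
  | n + 1 => fun ω => max 0 (g ω + birkM σ g n (σ ω))

lemma birkS_succ (σ : Ω → Ω) (g : Ω → ℝ) (n : ℕ) (ω : Ω) :
    birkS σ g (n + 1) ω = g ω + birkS σ g n (σ ω) := by
  simp only [birkS, Finset.sum_range_succ']
  simp [Function.iterate_succ_apply, add_comm]

lemma birkM_meas {σ : Ω → Ω} (hσ : Measurable σ) {g : Ω → ℝ} (hg : Measurable g) :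
    ∀ n, Measurable (birkM σ g n) := by
  intro n
  induction n with
  | zero => exact measurable_const
  | succ n ih => exact measurable_const.max (hg.add (ih.comp hσ))

lemma birkM_nonneg (σ : Ω → Ω) (g : Ω → ℝ) : ∀ n ω, 0 ≤ birkM σ g n ω := by
  intro n
  induction n with
  | zero => intro ω; exact le_refl 0
  | succ n _ => intro ω; exact le_max_left _ _

lemma birkM_mono (σ : Ω → Ω) (g : Ω → ℝ) : ∀ n ω, birkM σ g n ω ≤ birkM σ g (n + 1) ω := by
  intro n
  induction n with
  | zero => intro ω; exact birkM_nonneg σ g 1 ω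
  | succ n ih =>
      intro ω
      exact max_le_max (le_refl 0) (add_le_add (le_refl _) (ih (σ ω)))

lemma birkM_mono' (σ : Ω → Ω) (g : Ω → ℝ) {n n' : ℕ} (h : n ≤ n') (ω : Ω) :
    birkM σ g n ω ≤ birkM σ g n' ω := by
  induction n' with
  | zero => simpa [Nat.le_zero.1 h] using le_refl _
  | succ n' ih =>
      rcases Nat.lt_or_ge n (n' + 1) with h' | h'
      · exact (ih (Nat.lt_succ_iff.1 h')).trans (birkM_mono σ g n' ω)
      · have : n = n' + 1 := le_antisymm h h'
        simp [this]

lemma birkS_le_birkM (σ : Ω → Ω) (g : Ω → ℝ) : ∀ n ω, birkS σ g n ω ≤ birkM σ g n ω := by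
  intro n
  induction n with
  | zero => intro ω; simp [birkS, birkM]
  | succ n ih =>
      intro ω
      rw [birkS_succ]
      exact le_trans (add_le_add (le_refl _) (ih (σ ω))) (le_max_right _ _)

lemma birkM_int [IsProbabilityMeasure m] {σ : Ω → Ω} (hmp : MeasurePreserving σ m m)
    {g : Ω → ℝ} (hgi : Integrable g m) : ∀ n, Integrable (birkM σ g n) m := by
  intro n
  induction n with
  | zero => simpa [birkM] using (integrable_const (0 : ℝ))
  | succ n ih =>
      have h1 : Integrable (fun ω => g ω + birkM σ g n (σ ω)) m :=
        hgi.add (integrable_comp_mp hmp ih)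
      have := h1.pos_part
      simpa [birkM, max_comm] using this

/-- Garsia's maximal ergodic inequality (positive part). -/
lemma birk_maximal [IsProbabilityMeasure m] {σ : Ω → Ω} (hmp : MeasurePreserving σ m m)
    {g : Ω → ℝ} (hgm : Measurable g) (hgi : Integrable g m) :
    0 ≤ ∫ ω, Set.indicator {ω | ∃ n, 0 < birkM σ g n ω} g ω ∂m := by
  have hσ : Measurable σ := hmp.measurable
  set A : ℕ → Set Ω := fun n => {ω | 0 < birkM σ g (n + 1) ω} with hA
  have hAmeas : ∀ n, MeasurableSet (A n) :=
    fun n => measurableSet_lt measurable_const (birkM_meas hσ hgm (n + 1))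
  set B : Set Ω := {ω | ∃ n, 0 < birkM σ g n ω} with hB
  have hBmeas : MeasurableSet B := by
    have : B = ⋃ n, {ω | 0 < birkM σ g n ω} := by
      ext ω; simp [hB]
    rw [this]
    exact MeasurableSet.iUnion fun n =>
      measurableSet_lt measurable_const (birkM_meas hσ hgm n)
  -- step inequality
  have key : ∀ n, (0 : ℝ) ≤ ∫ ω, Set.indicator (A n) g ω ∂m := by
    intro n
    have hptwise : ∀ ω, birkM σ g (n + 1) ω - birkM σ g n (σ ω) ≤ Set.indicator (A n) g ω := by
      intro ω
      by_cases hω : ω ∈ A n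
      · rw [Set.indicator_of_mem hω]
        have hpos : 0 < max 0 (g ω + birkM σ g n (σ ω)) := hω
        have h2 : 0 < g ω + birkM σ g n (σ ω) := by
          by_contra hcon
          push_neg at hcon
          rw [max_eq_left hcon] at hpos
          exact lt_irrefl _ hpos
        have : birkM σ g (n + 1) ω = g ω + birkM σ g n (σ ω) := max_eq_right h2.le
        rw [this]; ring_nf; exact le_refl _
      · rw [Set.indicator_of_notMem hω]
        have h0 : birkM σ g (n + 1) ω = 0 := by
          have := birkM_nonneg σ g (n + 1) ω
          rcases lt_or_eq_of_le this with h | h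
          · exact absurd h hω
          · exact h.symm
        rw [h0]
        have := birkM_nonneg σ g n (σ ω)
        linarith
    have hint1 : Integrable (fun ω => birkM σ g (n + 1) ω - birkM σ g n (σ ω)) m :=
      (birkM_int hmp hgi (n + 1)).sub (integrable_comp_mp hmp (birkM_int hmp hgi n))
    have hint2 : Integrable (fun ω => Set.indicator (A n) g ω) m := hgi.indicator (hAmeas n)
    have hmono := integral_mono hint1 hint2 hptwise
    have hcomp : ∫ ω, birkM σ g n (σ ω) ∂m = ∫ ω, birkM σ g n ω ∂m :=
      integral_comp_mp hmp (birkM_meas hσ hgm n).aestronglyMeasurable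
    rw [integral_sub (birkM_int hmp hgi (n + 1)) (integrable_comp_mp hmp (birkM_int hmp hgi n)),
      hcomp] at hmono
    have hMmono : ∫ ω, birkM σ g n ω ∂m ≤ ∫ ω, birkM σ g (n + 1) ω ∂m :=
      integral_mono (birkM_int hmp hgi n) (birkM_int hmp hgi (n + 1)) (fun ω => birkM_mono σ g n ω)
    linarith
  -- pass to the limit via dominated convergence
  have hlimit : Tendsto (fun n => ∫ ω, Set.indicator (A n) g ω ∂m) atTop
      (nhds (∫ ω, Set.indicator B g ω ∂m)) := by
    apply tendsto_integral_of_dominated_convergence (fun ω => |g ω|)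
    · exact fun n => (hgm.indicator (hAmeas n)).aestronglyMeasurable
    · exact hgi.abs
    · intro n
      refine Filter.Eventually.of_forall (fun ω => ?_)
      rw [Real.norm_eq_abs]
      by_cases hω : ω ∈ A n
      · rw [Set.indicator_of_mem hω]
      · rw [Set.indicator_of_notMem hω]; simp
    · refine Filter.Eventually.of_forall (fun ω => ?_)
      by_cases hω : ω ∈ B
      · rw [Set.indicator_of_mem hω]
        obtain ⟨n, hn⟩ := hω
        have hn0 : n ≠ 0 := by
          intro h; rw [h] at hn; simp [birkM] at hn
        obtain ⟨n', rfl⟩ := Nat.exists_eq_succ_of_ne_zero hn0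
        have : ∀ k ≥ n', Set.indicator (A k) g ω = g ω := by
          intro k hk
          have : ω ∈ A k := lt_of_lt_of_le hn (birkM_mono' σ g (Nat.succ_le_succ hk) ω)
          rw [Set.indicator_of_mem this]
        exact tendsto_const_nhds.congr' (eventually_atTop.2 ⟨n', fun k hk => (this k hk).symm⟩)
      · rw [Set.indicator_of_notMem hω]
        have : ∀ k, Set.indicator (A k) g ω = 0 := by
          intro k
          have : ω ∉ A k := fun h => hω ⟨k + 1, h⟩
          rw [Set.indicator_of_notMem this]
        simpa [this] using tendsto_const_nhds
  exact ge_of_tendsto' hlimit key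




/-- frequently-above-slope sets -/
def birkB (σ : Ω → Ω) (g : Ω → ℝ) (δ : ℝ) : Set Ω :=
  {ω | ∀ N : ℕ, ∃ n, N ≤ n ∧ δ * n < birkS σ g n ω}

lemma birkS_meas {σ : Ω → Ω} (hσ : Measurable σ) {g : Ω → ℝ} (hg : Measurable g) (n : ℕ) :
    Measurable (birkS σ g n) :=
  Finset.measurable_sum _ (fun k _ => hg.comp (hσ.iterate k))

lemma birkB_meas {σ : Ω → Ω} (hσ : Measurable σ) {g : Ω → ℝ} (hg : Measurable g) (δ : ℝ) :
    MeasurableSet (birkB σ g δ) := by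
  have : birkB σ g δ = ⋂ N : ℕ, ⋃ n : ℕ, ⋃ _h : N ≤ n, {ω | δ * n < birkS σ g n ω} := by
    ext ω; simp [birkB]
  rw [this]
  exact MeasurableSet.iInter fun N => MeasurableSet.iUnion fun n => MeasurableSet.iUnion
    fun _ => measurableSet_lt measurable_const (birkS_meas hσ hg n)

lemma slope_helper {δ δ' : ℝ} (h : δ' < δ) (a : ℝ) :
    ∀ᶠ n : ℕ in atTop, a ≤ (δ - δ') * n := by
  have h1 : Tendsto (fun n : ℕ => (δ - δ') * n) atTop atTop :=
    Tendsto.const_mul_atTop (by linarith) tendsto_natCast_atTop_atTop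
  exact h1.eventually_ge_atTop a

lemma birkB_sub1 {σ : Ω → Ω} {g : Ω → ℝ} {δ δ' : ℝ} (h : δ' < δ) :
    σ ⁻¹' birkB σ g δ ⊆ birkB σ g δ' := by
  intro ω hω
  intro N
  obtain ⟨N₀, hN₀⟩ := eventually_atTop.1 (slope_helper h (δ' - g ω))
  obtain ⟨n, hn1, hn2⟩ := hω (max N N₀)
  refine ⟨n + 1, le_trans (le_trans (le_max_left _ _) hn1) (Nat.le_succ n), ?_⟩
  rw [birkS_succ]
  have h3 : δ' - g ω ≤ (δ - δ') * n := hN₀ n (le_trans (le_max_right _ _) hn1)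
  have hc : (δ' : ℝ) * ((n : ℕ) + 1 : ℕ) = δ' * n + δ' := by push_cast; ring
  rw [hc]
  have h4 : (δ - δ') * n = δ * n - δ' * n := by ring
  linarith [hn2]

lemma birkB_sub2 {σ : Ω → Ω} {g : Ω → ℝ} {δ δ' : ℝ} (h : δ' < δ) :
    birkB σ g δ ⊆ σ ⁻¹' birkB σ g δ' := by
  intro ω hω
  intro N
  obtain ⟨N₀, hN₀⟩ := eventually_atTop.1 (slope_helper h (g ω - δ))
  obtain ⟨n, hn1, hn2⟩ := hω (max (N + 1) (N₀ + 1))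
  have hn0 : n ≠ 0 := by
    have := le_trans (le_max_left _ _) hn1; omega
  obtain ⟨k, rfl⟩ := Nat.exists_eq_succ_of_ne_zero hn0
  refine ⟨k, ?_, ?_⟩
  · have := le_trans (le_max_left _ _) hn1; omega
  · have hk0 : g ω - δ ≤ (δ - δ') * k := by
      apply hN₀
      have := le_trans (le_max_right _ _) hn1; omega
    rw [birkS_succ] at hn2
    have hc : (δ : ℝ) * ((k : ℕ) + 1 : ℕ) = δ * k + δ := by push_cast; ring
    rw [hc] at hn2
    have h4 : (δ - δ') * k = δ * k - δ' * k := by ring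
    linarith

/-- One-sided Birkhoff bound. -/
lemma birkhoff_upper [IsProbabilityMeasure m] {σ : Ω → Ω} (hmp : MeasurePreserving σ m m)
    (herg : Ergodic σ m) {f : Ω → ℝ} (hfm : Measurable f) (hfi : Integrable f m)
    {ε : ℝ} (hε : 0 < ε) :
    ∀ᵐ ω ∂m, ∀ᶠ n : ℕ in atTop,
      ∑ k ∈ Finset.range n, f (σ^[k] ω) ≤ n * (∫ x, f x ∂m + ε) := by
  have hσ : Measurable σ := hmp.measurable
  set g : Ω → ℝ := fun ω => f ω - (∫ x, f x ∂m + ε / 2) with hg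
  have hgm : Measurable g := hfm.sub measurable_const
  have hgi : Integrable g m := hfi.sub (integrable_const _)
  have hgint : ∫ ω, g ω ∂m = -(ε / 2) := by
    rw [hg]
    rw [integral_sub hfi (integrable_const _), integral_const]
    simp [measure_univ]
  set Bst : Set Ω := ⋃ k : ℕ, birkB σ g (1 / (k + 1)) with hBst
  have hBstmeas : MeasurableSet Bst :=
    MeasurableSet.iUnion fun k => birkB_meas hσ hgm _
  have hdelta : ∀ k : ℕ, (1 : ℝ) / (k + 1 + 1) < 1 / (k + 1) := by
    intro k
    apply one_div_lt_one_div_of_lt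
    · positivity
    · linarith
  have hinv : σ ⁻¹' Bst = Bst := by
    apply subset_antisymm
    · rw [hBst, Set.preimage_iUnion]
      refine Set.iUnion_subset fun k => ?_
      refine le_trans (birkB_sub1 (hdelta k)) ?_
      have h := Set.subset_iUnion (fun k : ℕ => birkB σ g (1 / ((k : ℝ) + 1))) (k + 1)
      push_cast at h
      exact h
    · rw [hBst, Set.preimage_iUnion]
      refine Set.iUnion_subset fun k => ?_
      have h := Set.subset_iUnion (fun k : ℕ => σ ⁻¹' birkB σ g (1 / ((k : ℝ) + 1))) (k + 1)
      push_cast at h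
      exact le_trans (birkB_sub2 (hdelta k)) h
  have hzero : m Bst = 0 := by
    rcases herg.toPreErgodic.measure_self_or_compl_eq_zero hBstmeas hinv with h | h
    · exact h
    · exfalso
      -- m Bst = 1, contradiction with maximal inequality
      have hae : ∀ᵐ ω ∂m, ω ∈ Bst := by
        rw [ae_iff]
        have he : {a | ¬ a ∈ Bst} = Bstᶜ := rfl
        rw [he]; exact h
      have hsub : Bst ⊆ {ω | ∃ n, 0 < birkM σ g n ω} := by
        intro ω hω
        rw [hBst, Set.mem_iUnion] at hω
        obtain ⟨k, hk⟩ := hω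
        obtain ⟨n, hn1, hn2⟩ := hk 1
        refine ⟨n, lt_of_lt_of_le (lt_of_le_of_lt ?_ hn2) (birkS_le_birkM σ g n ω)⟩
        positivity
      have hcong : Set.indicator {ω | ∃ n, 0 < birkM σ g n ω} g =ᵐ[m] g := by
        filter_upwards [hae] with ω hω
        rw [Set.indicator_of_mem (hsub hω)]
      have := birk_maximal hmp hgm hgi
      rw [integral_congr_ae hcong, hgint] at this
      linarith
  -- conclude
  have hae : ∀ᵐ ω ∂m, ω ∉ Bst := by
    rw [ae_iff]
    have he2 : {a | ¬ a ∉ Bst} = Bst := by ext a; simp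
    rw [he2]; exact hzero
  filter_upwards [hae] with ω hω
  obtain ⟨k, hk⟩ := exists_nat_one_div_lt (show (0:ℝ) < ε / 2 by linarith)
  have hknot : ω ∉ birkB σ g (1 / (k + 1)) := fun h => hω (Set.mem_iUnion.2 ⟨k, h⟩)
  simp only [birkB, Set.mem_setOf_eq, not_forall] at hknot
  obtain ⟨N, hN⟩ := hknot
  push_neg at hN
  rw [eventually_atTop]
  refine ⟨N, fun n hn => ?_⟩
  have h1 : birkS σ g n ω ≤ 1 / (k + 1 : ℝ) * n := hN n hn
  have h2 : birkS σ g n ω = (∑ j ∈ Finset.range n, f (σ^[j] ω)) - n * (∫ x, f x ∂m + ε / 2) := by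
    simp only [birkS, hg, Finset.sum_sub_distrib, Finset.sum_const, Finset.card_range,
      nsmul_eq_mul]
  have h3 : (1 / (k + 1 : ℝ)) * n ≤ ε / 2 * n := by
    apply mul_le_mul_of_nonneg_right hk.le (Nat.cast_nonneg n)
  have h4 : (∑ j ∈ Finset.range n, f (σ^[j] ω)) - n * (∫ x, f x ∂m + ε / 2)
      ≤ ε / 2 * n := by
    rw [← h2]; exact h1.trans h3
  have h5 : (n : ℝ) * (∫ x, f x ∂m + ε) = n * (∫ x, f x ∂m + ε / 2) + ε / 2 * n := by ring
  linarith

/-- Birkhoff's pointwise ergodic theorem, ergodic case. -/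
lemma birkhoff_ae [IsProbabilityMeasure m] {σ : Ω → Ω} (hmp : MeasurePreserving σ m m)
    (herg : Ergodic σ m) {f : Ω → ℝ} (hfm : Measurable f) (hfi : Integrable f m) :
    ∀ᵐ ω ∂m, Tendsto (fun n : ℕ => (∑ k ∈ Finset.range n, f (σ^[k] ω)) / n) atTop
      (nhds (∫ x, f x ∂m)) := by
  have hup : ∀ᵐ ω ∂m, ∀ j : ℕ, (∀ᶠ n : ℕ in atTop,
      ∑ k ∈ Finset.range n, f (σ^[k] ω) ≤ n * (∫ x, f x ∂m + 1 / (j + 1))) ∧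
      (∀ᶠ n : ℕ in atTop,
      ∑ k ∈ Finset.range n, (-f) (σ^[k] ω) ≤ n * (∫ x, (-f) x ∂m + 1 / (j + 1))) := by
    rw [ae_all_iff]
    intro j
    have hj : (0:ℝ) < 1 / (j + 1) := by positivity
    filter_upwards [birkhoff_upper hmp herg hfm hfi hj,
      birkhoff_upper hmp herg hfm.neg hfi.neg hj] with ω h1 h2
    exact ⟨h1, h2⟩
  filter_upwards [hup] with ω hω
  rw [Metric.tendsto_atTop]
  intro ε hε
  obtain ⟨j, hj⟩ := exists_nat_one_div_lt (show (0:ℝ) < ε by linarith)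
  obtain ⟨N1, hN1⟩ := eventually_atTop.1 (hω j).1
  obtain ⟨N2, hN2⟩ := eventually_atTop.1 (hω j).2
  refine ⟨max (max N1 N2) 1, fun n hn => ?_⟩
  have hn1 : N1 ≤ n := le_trans (le_trans (le_max_left _ _) (le_max_left _ _)) hn
  have hn2 : N2 ≤ n := le_trans (le_trans (le_max_right _ _) (le_max_left _ _)) hn
  have hnpos : (0:ℝ) < n := by
    have : 1 ≤ n := le_trans (le_max_right _ _) hn
    exact_mod_cast this
  have h1 := hN1 n hn1
  have h2 := hN2 n hn2
  rw [Real.dist_eq, abs_lt]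
  have hint : ∫ x, (-f) x ∂m = -∫ x, f x ∂m := by
    simp [integral_neg]
  rw [hint] at h2
  have h2' : -(∑ k ∈ Finset.range n, f (σ^[k] ω)) ≤ n * (-∫ x, f x ∂m + 1 / (j + 1)) := by
    simpa [Finset.sum_neg_distrib] using h2
  have ha : (∑ k ∈ Finset.range n, f (σ^[k] ω)) / n ≤ ∫ x, f x ∂m + 1 / (j + 1) := by
    rw [div_le_iff₀ hnpos]
    have : (∫ x, f x ∂m + 1 / (↑j + 1)) * n = n * (∫ x, f x ∂m + 1 / (↑j + 1)) := by ring
    linarith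
  have hb : ∫ x, f x ∂m - 1 / (j + 1) ≤ (∑ k ∈ Finset.range n, f (σ^[k] ω)) / n := by
    rw [le_div_iff₀ hnpos]
    have : (∫ x, f x ∂m - 1 / (↑j + 1)) * n = -(n * (-∫ x, f x ∂m + 1 / (↑j + 1))) := by ring
    linarith
  constructor <;> linarith
variable {Ω : Type*} [MeasurableSpace Ω] {m : Measure Ω}

/-- If the normalized orbit values of a fixed measurable function converge a.e. to a constant,
that constant is zero. -/
lemma coboundary_limit_zero [IsProbabilityMeasure m] {T : Ω → Ω}
    (hT : MeasurePreserving T m m) {g : Ω → ℝ} (hg : Measurable g) {L : ℝ}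
    (hlim : ∀ᵐ ω ∂m, Tendsto (fun n : ℕ => g (T^[n] ω) / n) atTop (nhds L)) : L = 0 := by
  by_contra hL
  have hLpos : (0:ℝ) < |L| / 2 := by
    have : 0 < |L| := abs_pos.2 hL
    linarith
  set X : ℕ → Ω → ℝ := fun n ω => g (T^[n] ω) / n with hX
  have hXmeas : ∀ n, Measurable (X n) := fun n => (hg.comp (hT.measurable.iterate n)).div_const _
  have h1 : TendstoInMeasure m X atTop (fun _ => L) :=
    tendstoInMeasure_of_tendsto_ae (fun n => (hXmeas n).aestronglyMeasurable) hlim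
  have h1' := (tendstoInMeasure_iff_dist.1 h1) _ hLpos
  set E : ℕ → Set Ω := fun n => {ω | |L| / 2 ≤ |g ω| / (n + 1)} with hE
  have hEmeas : ∀ n, MeasurableSet (E n) :=
    fun n => measurableSet_le measurable_const ((hg.abs).div_const _)
  have hEanti : Antitone E := by
    intro n n' h ω hω
    simp only [hE, Set.mem_setOf_eq] at *
    refine le_trans hω ?_
    apply div_le_div_of_nonneg_left (abs_nonneg _) (by positivity)
    have : (n:ℝ) ≤ n' := by exact_mod_cast h
    linarith
  have hEempty : ⋂ n, E n = ∅ := by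
    ext ω
    simp only [Set.mem_iInter, Set.mem_empty_iff_false, iff_false, not_forall]
    obtain ⟨n, hn⟩ := exists_nat_gt (|g ω| / (|L| / 2))
    refine ⟨n, ?_⟩
    simp only [hE, Set.mem_setOf_eq, not_le]
    rw [div_lt_iff₀ (by positivity)]
    rw [div_lt_iff₀ hLpos] at hn
    nlinarith [abs_nonneg (g ω), hLpos]
  have h2 : Tendsto (fun n => m (E n)) atTop (nhds 0) := by
    have h := tendsto_measure_iInter_atTop (fun n => (hEmeas n).nullMeasurableSet) hEanti
      ⟨0, measure_ne_top m (E 0)⟩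
    rw [hEempty] at h
    rw [measure_empty] at h
    exact h
  have h3 : ∀ n : ℕ, m {ω | |L| / 2 ≤ |X (n + 1) ω|} = m (E n) := by
    intro n
    have hset : {ω | |L| / 2 ≤ |X (n + 1) ω|} = T^[n+1] ⁻¹' (E n) := by
      ext ω
      simp only [hX, Set.mem_setOf_eq, Set.mem_preimage, hE]
      rw [abs_div, Nat.abs_cast]
      push_cast
      exact Iff.rfl
    rw [hset]
    exact (hT.iterate (n+1)).measure_preimage (hEmeas n).nullMeasurableSet
  have hhalf : (0:ENNReal) < 1/2 := by norm_num
  obtain ⟨N1, hN1⟩ := eventually_atTop.1 (h1'.eventually_lt_const hhalf)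
  obtain ⟨N2, hN2⟩ := eventually_atTop.1 (h2.eventually_lt_const hhalf)
  set n := max N1 N2 with hn
  have hm1 : m {x | |L| / 2 ≤ dist (X (n+1) x) L} < 1/2 :=
    hN1 (n+1) (le_trans (le_max_left _ _) (Nat.le_succ n))
  have hm2 : m {ω | |L| / 2 ≤ |X (n + 1) ω|} < 1/2 := by
    rw [h3 n]; exact hN2 n (le_max_right _ _)
  set S1 := {x | |L| / 2 ≤ dist (X (n+1) x) L} with hS1
  set S2 := {ω | |L| / 2 ≤ |X (n + 1) ω|} with hS2
  have hunion : m (S1 ∪ S2) < 1 := by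
    refine lt_of_le_of_lt (measure_union_le _ _) ?_
    calc m S1 + m S2 < 1/2 + 1/2 := ENNReal.add_lt_add hm1 hm2
    _ = 1 := by rw [one_div, ENNReal.inv_two_add_inv_two]
  have hne : S1 ∪ S2 ≠ Set.univ := by
    intro h
    rw [h, measure_univ] at hunion
    exact lt_irrefl _ hunion
  obtain ⟨ω, hω⟩ := (Set.ne_univ_iff_exists_notMem _).1 hne
  have hω1 : dist (X (n+1) ω) L < |L| / 2 := not_le.1 fun h => hω (Or.inl h)
  have hω2 : |X (n+1) ω| < |L| / 2 := not_le.1 fun h => hω (Or.inr h)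
  rw [Real.dist_eq] at hω1
  have : |L| ≤ |X (n+1) ω - L| + |X (n+1) ω| := by
    have h := abs_add_le (L - X (n+1) ω) (X (n+1) ω)
    simp only [sub_add_cancel] at h
    rw [abs_sub_comm] at h
    linarith
  linarith

lemma tsum_nonneg_eq_toReal {f : ℕ → ℝ} (hf : ∀ n, 0 ≤ f n) :
    ∑' n, f n = (∑' n, ENNReal.ofReal (f n)).toReal := by
  by_cases hs : Summable f
  · rw [← ENNReal.ofReal_tsum_of_nonneg hf hs, ENNReal.toReal_ofReal (tsum_nonneg hf)]
  · rw [tsum_eq_zero_of_not_summable hs]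
    have h : ∑' n, ENNReal.ofReal (f n) = ⊤ := by
      by_contra h
      have h2 := ENNReal.summable_toReal h
      refine hs (h2.congr fun n => ?_)
      exact ENNReal.toReal_ofReal (hf n)
    simp [h]

lemma summable_of_log_limit {P : ℕ → ℝ} (hP : ∀ j, 0 < P j) {L0 : ℝ} (hL0 : L0 < 0)
    (hlim : Tendsto (fun j : ℕ => Real.log (P j) / j) atTop (nhds L0)) : Summable P := by
  have h2 : ∀ᶠ j : ℕ in atTop, Real.log (P j) / j < L0 / 2 :=
    hlim.eventually_lt_const (by linarith)
  obtain ⟨N, hN⟩ := eventually_atTop.1 (h2.and (eventually_ge_atTop 1))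
  set r : ℝ := Real.exp (L0 / 2) with hr
  have hr0 : 0 < r := Real.exp_pos _
  have hr1 : r < 1 := Real.exp_lt_one_iff.2 (by linarith)
  have hbound : ∀ j ≥ N, P j ≤ r ^ j := by
    intro j hj
    obtain ⟨h1, hj1⟩ := hN j hj
    have hjpos : (0:ℝ) < j := by exact_mod_cast hj1
    rw [div_lt_iff₀ hjpos] at h1
    have : P j = Real.exp (Real.log (P j)) := (Real.exp_log (hP j)).symm
    rw [this]
    calc Real.exp (Real.log (P j)) ≤ Real.exp ((j:ℝ) * (L0/2)) := by
          apply Real.exp_le_exp.2; linarith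
    _ = r ^ j := by rw [← Real.exp_nat_mul]
  have hgeom : Summable (fun j : ℕ => r ^ (j + N)) := by
    refine ((summable_geometric_of_lt_one hr0.le hr1).mul_right (r ^ N)).congr fun j => ?_
    rw [pow_add]
  have hsum : Summable (fun j : ℕ => P (j + N)) := by
    refine Summable.of_nonneg_of_le (fun j => (hP _).le) (fun j => ?_) hgeom
    exact hbound (j + N) (Nat.le_add_left N j)
  exact (summable_nat_add_iff N).1 hsum


lemma log_T_limit {Ω : Type*} (σinv : Ω → Ω) (c d : Ω → ℝ) (hcpos : ∀ ω, 0 < c ω)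
    (hdpos : ∀ ω, 0 < d ω) {γ : ℝ} (hγ0 : 0 < γ) (ω : Ω) {Ic Idd : ℝ}
    (htc : Tendsto (fun n : ℕ => (∑ k ∈ Finset.range n,
      Real.log (c (σinv^[k] (σinv ω)))) / n) atTop (nhds Ic))
    (htd : Tendsto (fun n : ℕ => (∑ k ∈ Finset.range n,
      Real.log (d (σinv^[k] ω))) / n) atTop (nhds Idd)) :
    Tendsto (fun j : ℕ => Real.log (γ ^ (-(j : ℤ) - 1) * d (σinv^[j + 1] ω) *
      ∏ k ∈ Finset.range j, c (σinv^[k + 1] ω)) / j) atTop (nhds (Ic - Real.log γ)) := by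
  have hγne : γ ≠ 0 := ne_of_gt hγ0
  have hlog : ∀ j : ℕ, Real.log (γ ^ (-(j : ℤ) - 1) * d (σinv^[j + 1] ω) *
      ∏ k ∈ Finset.range j, c (σinv^[k + 1] ω)) =
      (-(j:ℝ) - 1) * Real.log γ + Real.log (d (σinv^[j + 1] ω)) +
      ∑ k ∈ Finset.range j, Real.log (c (σinv^[k + 1] ω)) := by
    intro j
    have hprodpos : (0:ℝ) < ∏ k ∈ Finset.range j, c (σinv^[k + 1] ω) :=
      Finset.prod_pos fun k _ => hcpos _
    rw [Real.log_mul (mul_ne_zero (zpow_ne_zero _ hγne) (ne_of_gt (hdpos _))) (ne_of_gt hprodpos),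
      Real.log_mul (zpow_ne_zero _ hγne) (ne_of_gt (hdpos _)),
      Real.log_zpow, Real.log_prod (fun k _ => ne_of_gt (hcpos _))]
    push_cast
    ring
  -- term 1
  have t1 : Tendsto (fun j : ℕ => ((-(j:ℝ) - 1) * Real.log γ) / j) atTop
      (nhds (-Real.log γ)) := by
    have h : Tendsto (fun j : ℕ => -Real.log γ + (-Real.log γ) / j) atTop
        (nhds (-Real.log γ + 0)) :=
      tendsto_const_nhds.add (tendsto_const_div_atTop_nhds_zero_nat _)
    rw [add_zero] at h
    refine h.congr' ?_
    filter_upwards [eventually_ge_atTop 1] with j hj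
    have hjne : (j:ℝ) ≠ 0 := by positivity
    field_simp
    ring
  -- term 3
  have t3 : Tendsto (fun j : ℕ => (∑ k ∈ Finset.range j,
      Real.log (c (σinv^[k + 1] ω))) / j) atTop (nhds Ic) := by
    have hit : ∀ k, σinv^[k+1] ω = σinv^[k] (σinv ω) :=
      fun k => Function.iterate_succ_apply σinv k ω
    refine htc.congr fun n => ?_
    simp only [hit]
  -- term 2
  have t2 : Tendsto (fun j : ℕ => Real.log (d (σinv^[j + 1] ω)) / j) atTop (nhds 0) := by
    set D : ℕ → ℝ := fun n => ∑ k ∈ Finset.range n, Real.log (d (σinv^[k] ω)) with hD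
    have hDdiff : ∀ j : ℕ, Real.log (d (σinv^[j + 1] ω)) = D ((j + 1) + 1) - D (j + 1) := by
      intro j
      simp only [hD]
      rw [Finset.sum_range_succ]
      ring
    have hshift : ∀ i : ℕ, Tendsto (fun j : ℕ => D (j + i) / ((j + i : ℕ) : ℝ)) atTop
        (nhds Idd) := fun i => htd.comp (tendsto_add_atTop_nat i)
    have hratio : ∀ i : ℕ, Tendsto (fun j : ℕ => ((j + i : ℕ) : ℝ) / j) atTop (nhds 1) := by
      intro i
      have h : Tendsto (fun j : ℕ => 1 + (i : ℝ) / j) atTop (nhds (1 + 0)) :=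
        tendsto_const_nhds.add (tendsto_const_div_atTop_nhds_zero_nat _)
      rw [add_zero] at h
      refine h.congr' ?_
      filter_upwards [eventually_ge_atTop 1] with j hj
      have hjne : (j:ℝ) ≠ 0 := by positivity
      push_cast
      field_simp
    have hterm : ∀ i : ℕ, Tendsto (fun j : ℕ => D (j + i) / j) atTop (nhds Idd) := by
      intro i
      have h := ((hshift i).mul (hratio i))
      rw [mul_one] at h
      refine h.congr' ?_
      filter_upwards [eventually_ge_atTop 1] with j hj
      have hjne : (j:ℝ) ≠ 0 := by positivity
      have hji : ((j + i : ℕ) : ℝ) ≠ 0 := by positivity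
      field_simp
    have h := (hterm 2).sub (hterm 1)
    rw [sub_self] at h
    refine h.congr fun j => ?_
    rw [hDdiff j, sub_div]
  have hsum : Tendsto (fun j : ℕ => ((-(j:ℝ) - 1) * Real.log γ) / j +
      Real.log (d (σinv^[j + 1] ω)) / j +
      (∑ k ∈ Finset.range j, Real.log (c (σinv^[k + 1] ω))) / j) atTop
      (nhds (-Real.log γ + 0 + Ic)) := (t1.add t2).add t3
  have heq : -Real.log γ + 0 + Ic = Ic - Real.log γ := by ring
  rw [heq] at hsum
  refine hsum.congr fun j => ?_
  rw [hlog j, add_div, add_div]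


end Stmt11Aux

section Main
open Stmt11Aux

/-- With `σ` ergodic invertible measure preserving, `log c, log d ∈ L¹(m)`
and `∫ log c dm < log γ < 0`, the solution
`a(ω) = Σ_{j≥0} γ^{-j-1} d(σ^{-j-1}ω) ∏_{k=1}^j c(σ^{-k}ω)` of the twisted cohomological
equation `γ·a∘σ = c·a + d` is tempered: for m-a.e. `ω`,
`(1/n)·log a(σ^n ω) → 0` as `|n| → ∞` (in both the forward and backward directions). -/
theorem stmt11 {Ω : Type*} [MeasurableSpace Ω] (m : Measure Ω) [IsProbabilityMeasure m]
    (σ σinv : Ω → Ω)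
    (hmp : MeasurePreserving σ m m) (herg : Ergodic σ m)
    (hlinv : Function.LeftInverse σinv σ) (hrinv : Function.RightInverse σinv σ)
    (hinvmeas : Measurable σinv)
    (c d : Ω → ℝ) (hcm : Measurable c) (hdm : Measurable d)
    (hcpos : ∀ ω, 0 < c ω) (hdpos : ∀ ω, 0 < d ω)
    (hlogc : Integrable (fun ω => Real.log (c ω)) m)
    (hlogd : Integrable (fun ω => Real.log (d ω)) m)
    (γ : ℝ) (hγ0 : 0 < γ) (hγ1 : γ < 1)
    (hintc : ∫ ω, Real.log (c ω) ∂m < Real.log γ) (hγneg : Real.log γ < 0)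
    (A : Ω → ℝ)
    (hA : ∀ ω, A ω = ∑' j : ℕ,
      γ ^ (-(j : ℤ) - 1) * d (σinv^[j + 1] ω) * ∏ k ∈ Finset.range j, c (σinv^[k + 1] ω)) :
    ∀ᵐ ω ∂m,
      Tendsto (fun n : ℕ => Real.log (A (σ^[n] ω)) / n) atTop (nhds 0) ∧
      Tendsto (fun n : ℕ => Real.log (A (σinv^[n] ω)) / n) atTop (nhds 0) := by
  have hσ : Measurable σ := hmp.measurable
  have hγne : γ ≠ 0 := ne_of_gt hγ0
  -- the inverse is measure preserving and ergodic
  have hmpinv : MeasurePreserving σinv m m := by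
    refine ⟨hinvmeas, ?_⟩
    have h1 : Measure.map σinv m = Measure.map σinv (Measure.map σ m) := by rw [hmp.map_eq]
    rw [h1, Measure.map_map hinvmeas hσ]
    have h2 : σinv ∘ σ = id := funext hlinv
    rw [h2, Measure.map_id]
  have herginv : Ergodic σinv m := by
    refine ⟨hmpinv, ⟨fun s hs hinvs => ?_⟩⟩
    refine herg.toPreErgodic.aeconst_set hs ?_
    ext ω
    constructor
    · intro hω
      have h3 : σ ω ∈ σinv ⁻¹' s := by rw [hinvs]; exact hω
      have h4 : σinv (σ ω) ∈ s := h3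
      rwa [hlinv ω] at h4
    · intro hω
      show σ ω ∈ s
      rw [← hinvs]
      show σinv (σ ω) ∈ s
      rwa [hlinv ω]
  -- the series terms
  set T : ℕ → Ω → ℝ := fun j ω => γ ^ (-(j : ℤ) - 1) * d (σinv^[j + 1] ω) *
    ∏ k ∈ Finset.range j, c (σinv^[k + 1] ω) with hT
  have hTpos : ∀ j ω, 0 < T j ω := fun j ω =>
    mul_pos (mul_pos (zpow_pos hγ0 _) (hdpos _)) (Finset.prod_pos fun k _ => hcpos _)
  have hTmeas : ∀ j, Measurable (T j) := by
    intro j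
    exact (measurable_const.mul (hdm.comp (hinvmeas.iterate (j + 1)))).mul
      (Finset.measurable_prod _ fun k _ => hcm.comp (hinvmeas.iterate (k + 1)))
  have hAmeas : Measurable A := by
    have hfun : A = fun ω => (∑' j, ENNReal.ofReal (T j ω)).toReal := by
      funext ω
      rw [hA ω]
      exact tsum_nonneg_eq_toReal (fun j => (hTpos j ω).le)
    rw [hfun]
    exact (Measurable.ennreal_tsum fun j => (hTmeas j).ennreal_ofReal).ennreal_toReal
  -- Birkhoff limits along the inverse map
  have hlogcm : Measurable fun ω => Real.log (c ω) := Real.measurable_log.comp hcm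
  have hlogdm : Measurable fun ω => Real.log (d ω) := Real.measurable_log.comp hdm
  have hBc := birkhoff_ae hmpinv herginv hlogcm hlogc
  have hBd := birkhoff_ae hmpinv herginv hlogdm hlogd
  have hBc' : ∀ᵐ ω ∂m, Tendsto (fun n : ℕ => (∑ k ∈ Finset.range n,
      Real.log (c (σinv^[k] (σinv ω)))) / n) atTop
      (nhds (∫ x, Real.log (c x) ∂m)) :=
    ae_of_ae_map hinvmeas.aemeasurable (by rw [hmpinv.map_eq]; exact hBc)
  -- a.e. summability
  have hSum : ∀ᵐ ω ∂m, Summable (fun j => T j ω) := by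
    filter_upwards [hBc', hBd] with ω h1 h2
    refine summable_of_log_limit (fun j => hTpos j ω)
      (show (∫ x, Real.log (c x) ∂m) - Real.log γ < 0 by linarith) ?_
    exact log_T_limit σinv c d hcpos hdpos hγ0 ω h1 h2
  -- the cohomological identity, pointwise given summability
  have hTσ : ∀ ω (j : ℕ), T (j + 1) (σ ω) = γ⁻¹ * c ω * T j ω := by
    intro ω j
    have hits : ∀ n : ℕ, σinv^[n + 1] (σ ω) = σinv^[n] ω := by
      intro n
      rw [Function.iterate_succ_apply, hlinv ω]
    have hz : γ ^ (-((j : ℕ) + 1 : ℤ) - 1) = γ⁻¹ * γ ^ (-(j : ℤ) - 1) := by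
      rw [show (-((j : ℕ) + 1 : ℤ) - 1) = (-1) + (-(j : ℤ) - 1) by ring, zpow_add₀ hγne]
      norm_num
    simp only [hT]
    rw [hits (j + 1), Finset.prod_range_succ']
    have hfold : ∀ k, c (σinv^[k + 1] (σ ω)) = c (σinv^[k] ω) := fun k => by rw [hits k]
    simp only [hfold]
    rw [Function.iterate_zero_apply]
    push_cast
    rw [hz]
    ring
  have hid : ∀ ω, Summable (fun j => T j ω) →
      Summable (fun j => T j (σ ω)) ∧ A (σ ω) = γ⁻¹ * (c ω * A ω + d ω) := by
    intro ω hsum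
    have hs1 : Summable (fun j => T (j + 1) (σ ω)) := by
      refine (hsum.mul_left (γ⁻¹ * c ω)).congr fun j => ?_
      rw [hTσ ω j]
    have hs2 : Summable (fun j => T j (σ ω)) := (summable_nat_add_iff 1).1 hs1
    refine ⟨hs2, ?_⟩
    have hT0 : T 0 (σ ω) = γ⁻¹ * d ω := by
      simp only [hT]
      rw [Function.iterate_one, hlinv ω]
      simp [zpow_neg, zpow_one]
    have htail : ∑' j, T (j + 1) (σ ω) = γ⁻¹ * c ω * A ω := by
      rw [hA ω]
      rw [show (∑' j, T (j + 1) (σ ω)) = ∑' j, (γ⁻¹ * c ω) * T j ω from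
        tsum_congr fun j => by rw [hTσ ω j]]
      rw [tsum_mul_left]
    rw [hA (σ ω), Summable.tsum_eq_zero_add hs2, hT0, htail]
    ring
  have hlow : ∀ ω, Summable (fun j => T j ω) → γ⁻¹ * d (σinv ω) ≤ A ω ∧ 0 < A ω := by
    intro ω hsum
    have hT0 : T 0 ω = γ⁻¹ * d (σinv ω) := by
      simp only [hT]
      rw [Function.iterate_one]
      simp [zpow_neg, zpow_one]
    have hkey : A ω = T 0 ω + ∑' j, T (j + 1) ω := by
      rw [hA ω]; exact Summable.tsum_eq_zero_add hsum
    have hnn : 0 ≤ ∑' j, T (j + 1) ω := tsum_nonneg fun j => (hTpos _ _).le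
    have hpos0 : 0 < γ⁻¹ * d (σinv ω) := mul_pos (inv_pos.2 hγ0) (hdpos _)
    constructor
    · rw [hkey, hT0]; linarith
    · rw [hkey, hT0]; linarith
  -- the coboundary functions
  set hf : Ω → ℝ := fun ω => Real.log (A (σ ω)) - Real.log (A ω) with hhf
  have hhfm : Measurable hf :=
    ((Real.measurable_log.comp hAmeas).comp hσ).sub (Real.measurable_log.comp hAmeas)
  set G : Ω → ℝ := fun ω => (2 * |Real.log γ| + Real.log 2 + |Real.log (c ω)|) +
    |Real.log (d ω)| + |Real.log (d (σinv ω))| with hG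
  have hint3 : Integrable (fun ω => Real.log (d (σinv ω))) m :=
    integrable_comp_mp hmpinv hlogd
  have hGint : Integrable G m := by
    exact ((((integrable_const _).add hlogc.abs).add hlogd.abs).add hint3.abs)
  have hSumσ : ∀ᵐ ω ∂m, Summable (fun j => T j (σ ω)) :=
    ae_of_ae_map hσ.aemeasurable (by rw [hmp.map_eq]; exact hSum)
  have hbound : ∀ᵐ ω ∂m, |hf ω| ≤ G ω := by
    filter_upwards [hSum] with ω hsum
    obtain ⟨hsumσ, hidω⟩ := hid ω hsum
    obtain ⟨hlowω, hposω⟩ := hlow ω hsum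
    have hginv : (0:ℝ) < γ⁻¹ := by positivity
    have hcApos : 0 < c ω * A ω := mul_pos (hcpos ω) hposω
    have hcAd : 0 < c ω * A ω + d ω := by linarith [hdpos ω]
    have hlogAσ : Real.log (A (σ ω)) = -Real.log γ + Real.log (c ω * A ω + d ω) := by
      rw [hidω, Real.log_mul (ne_of_gt hginv) (ne_of_gt hcAd), Real.log_inv]
    have hhfval : hf ω = -Real.log γ + Real.log (c ω * A ω + d ω) - Real.log (A ω) := by
      simp only [hhf]; rw [hlogAσ]
    have hlb : Real.log (c ω) + Real.log (A ω) ≤ Real.log (c ω * A ω + d ω) := by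
      rw [← Real.log_mul (ne_of_gt (hcpos ω)) (ne_of_gt hposω)]
      exact Real.log_le_log hcApos (by linarith [hdpos ω])
    set e := γ * d ω / d (σinv ω) with he
    have hepos : 0 < e := div_pos (mul_pos hγ0 (hdpos ω)) (hdpos (σinv ω))
    have hd_le : d ω ≤ e * A ω := by
      have h1 : e * (γ⁻¹ * d (σinv ω)) = d ω := by
        rw [he]
        field_simp [ne_of_gt (hdpos (σinv ω)), hγne]
      have h2 := mul_le_mul_of_nonneg_left hlowω hepos.le
      linarith [h1 ▸ h2]
    have hmaxub : c ω * A ω + d ω ≤ A ω * (2 * max (c ω) e) := by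
      have h1 : c ω ≤ max (c ω) e := le_max_left _ _
      have h2 : e ≤ max (c ω) e := le_max_right _ _
      nlinarith [hposω.le, hd_le]
    have hub : Real.log (c ω * A ω + d ω) ≤
        Real.log (A ω) + (Real.log 2 + Real.log (max (c ω) e)) := by
      have hmaxpos : 0 < max (c ω) e := lt_of_lt_of_le (hcpos ω) (le_max_left _ _)
      calc Real.log (c ω * A ω + d ω) ≤ Real.log (A ω * (2 * max (c ω) e)) :=
            Real.log_le_log hcAd hmaxub
      _ = Real.log (A ω) + (Real.log 2 + Real.log (max (c ω) e)) := by
            rw [Real.log_mul (ne_of_gt hposω) (by positivity),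
              Real.log_mul (by norm_num) (ne_of_gt hmaxpos)]
    have hlogmax : Real.log (max (c ω) e) = max (Real.log (c ω)) (Real.log e) := by
      rcases le_total (c ω) e with hle | hle
      · rw [max_eq_right hle, max_eq_right (Real.log_le_log (hcpos ω) hle)]
      · rw [max_eq_left hle, max_eq_left (Real.log_le_log hepos hle)]
    have hloge : Real.log e = Real.log γ + Real.log (d ω) - Real.log (d (σinv ω)) := by
      rw [he, Real.log_div (mul_ne_zero hγne (ne_of_gt (hdpos ω))) (ne_of_gt (hdpos _)),
        Real.log_mul hγne (ne_of_gt (hdpos _))]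
    have hlog2 : (0:ℝ) ≤ Real.log 2 := Real.log_nonneg one_le_two
    rw [abs_le]
    constructor
    · rw [hhfval]
      have := neg_abs_le (Real.log γ)
      have := neg_abs_le (Real.log (c ω))
      have := abs_nonneg (Real.log (d ω))
      have := abs_nonneg (Real.log (d (σinv ω)))
      simp only [hG]
      linarith [hlb]
    · rw [hhfval]
      have hmaxb : max (Real.log (c ω)) (Real.log e) ≤
          |Real.log (c ω)| + (|Real.log γ| + |Real.log (d ω)| + |Real.log (d (σinv ω))|) := by
        apply max_le
        · linarith [le_abs_self (Real.log (c ω)), abs_nonneg (Real.log γ),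
            abs_nonneg (Real.log (d ω)), abs_nonneg (Real.log (d (σinv ω)))]
        · rw [hloge]
          linarith [le_abs_self (Real.log γ), le_abs_self (Real.log (d ω)),
            neg_abs_le (Real.log (d (σinv ω))), abs_nonneg (Real.log (c ω))]
      simp only [hG]
      rw [hlogmax] at hub
      linarith [neg_abs_le (Real.log γ), hub]
  have hhfint : Integrable hf m := by
    refine Integrable.mono' hGint hhfm.aestronglyMeasurable ?_
    filter_upwards [hbound] with ω hb
    rwa [Real.norm_eq_abs]
  set hf' : Ω → ℝ := fun ω => Real.log (A (σinv ω)) - Real.log (A ω) with hhf'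
  have hhf'eq : hf' = fun ω => -(hf (σinv ω)) := by
    funext ω
    simp only [hhf, hhf']
    rw [hrinv ω]
    ring
  have hhf'm : Measurable hf' :=
    ((Real.measurable_log.comp hAmeas).comp hinvmeas).sub (Real.measurable_log.comp hAmeas)
  have hhf'int : Integrable hf' m := by
    rw [hhf'eq]
    exact (integrable_comp_mp hmpinv hhfint).neg
  -- forward limit
  have htel : ∀ (S : Ω → Ω) (hfS : Ω → ℝ), (∀ ω, hfS ω = Real.log (A (S ω)) - Real.log (A ω)) →
      ∀ ω (n : ℕ), ∑ k ∈ Finset.range n, hfS (S^[k] ω) =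
        Real.log (A (S^[n] ω)) - Real.log (A ω) := by
    intro S hfS hdef ω n
    have hterm : ∀ k, hfS (S^[k] ω) =
        Real.log (A (S^[k + 1] ω)) - Real.log (A (S^[k] ω)) := by
      intro k
      rw [hdef, Function.iterate_succ_apply']
    calc ∑ k ∈ Finset.range n, hfS (S^[k] ω)
        = ∑ k ∈ Finset.range n,
            (Real.log (A (S^[k + 1] ω)) - Real.log (A (S^[k] ω))) :=
          Finset.sum_congr rfl fun k _ => hterm k
    _ = Real.log (A (S^[n] ω)) - Real.log (A (S^[0] ω)) :=
          Finset.sum_range_sub (fun k => Real.log (A (S^[k] ω))) n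
    _ = Real.log (A (S^[n] ω)) - Real.log (A ω) := by rw [Function.iterate_zero_apply]
  have hlimit : ∀ (S : Ω → Ω) (hmpS : MeasurePreserving S m m) (hergS : Ergodic S m)
      (hfS : Ω → ℝ) (hfSm : Measurable hfS) (hfSi : Integrable hfS m),
      (∀ ω, hfS ω = Real.log (A (S ω)) - Real.log (A ω)) →
      ∀ᵐ ω ∂m, Tendsto (fun n : ℕ => Real.log (A (S^[n] ω)) / n) atTop (nhds 0) := by
    intro S hmpS hergS hfS hfSm hfSi hdef
    have hae : ∀ᵐ ω ∂m, Tendsto (fun n : ℕ => Real.log (A (S^[n] ω)) / n) atTop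
        (nhds (∫ x, hfS x ∂m)) := by
      filter_upwards [birkhoff_ae hmpS hergS hfSm hfSi] with ω hω
      have h2 : Tendsto (fun n : ℕ => (Real.log (A (S^[n] ω)) - Real.log (A ω)) / n +
          Real.log (A ω) / n) atTop (nhds (∫ x, hfS x ∂m + 0)) := by
        refine Tendsto.add ?_ (tendsto_const_div_atTop_nhds_zero_nat _)
        exact hω.congr fun n => by rw [htel S hfS hdef ω n]
      rw [add_zero] at h2
      refine h2.congr fun n => ?_
      rw [← add_div, sub_add_cancel]
    have hz : ∫ x, hfS x ∂m = 0 :=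
      coboundary_limit_zero hmpS (Real.measurable_log.comp hAmeas) hae
    rwa [hz] at hae
  have hfor := hlimit σ hmp herg hf hhfm hhfint (fun ω => rfl)
  have hback := hlimit σinv hmpinv herginv hf' hhf'm hhf'int (fun ω => rfl)
  filter_upwards [hfor, hback] with ω h1 h2
  exact ⟨h1, h2⟩

end Main
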